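/- For every p, q ∈ ℝᵐ, φ(p+q) − φ(p) − qᵀg(p) = ½ qᵀ A Diag(d) Aᵀ q, where for each j = 1,…,n, d_j = ∫₀¹ ( ∫₀¹ σ((x̂ + Aᵀp + s t Aᵀq)_j) ds ) 2t dt and σ(ξ) = 1 if ξ > 0, σ(ξ) = 0 if ξ ≤ 0. -/

import Mathlib

open Matrix

/-- `σ(ξ) = 1` if `ξ > 0` and `0` if `ξ ≤ 0`. -/
noncomputable def posSign (ξ : ℝ) : ℝ := if 0 < ξ then 1 else 0

section AuxTaylor
open Matrix intervalIntegral MeasureTheory Set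

lemma posSign_mono : Monotone posSign := by
  intro x y h
  unfold posSign
  split_ifs with h1 h2 h2 <;> norm_num
  exact absurd (lt_of_lt_of_le h1 h) h2

lemma intInt_posSign (c w : ℝ) : IntervalIntegrable (fun s => posSign (c + s * w)) MeasureTheory.volume 0 1 := by
  rcases le_total 0 w with hw | hw
  · exact (posSign_mono.comp (by intro x y h; dsimp; nlinarith : Monotone fun s : ℝ => c + s * w)).intervalIntegrable
  · exact ((posSign_mono.comp_antitone (by intro x y h; dsimp; nlinarith : Antitone fun s : ℝ => c + s * w))).intervalIntegrable

lemma keyB (c w : ℝ) : (∫ s in (0:ℝ)..1, posSign (c + s * w)) * w = max 0 (c + w) - max 0 c := by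
  have hcontF : Continuous fun s : ℝ => max 0 (c + s * w) :=
    continuous_const.max (continuous_const.add (continuous_id.mul continuous_const))
  rcases lt_trichotomy w 0 with hw | hw | hw
  · -- w < 0
    rw [← intervalIntegral.integral_mul_const]
    have := intervalIntegral.integral_eq_sub_of_hasDeriv_right_of_le (f := fun s => max 0 (c + s * w))
      (f' := fun s => posSign (c + s * w) * w) (by norm_num) hcontF.continuousOn ?_ 
      ((intInt_posSign c w).mul_const w)
    · rw [this]; norm_num
    · intro x _
      rcases lt_trichotomy (c + x * w) 0 with h | h | h
      · have : HasDerivAt (fun s : ℝ => max 0 (c + s * w)) 0 x := by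
          have hev : (fun s : ℝ => max 0 (c + s * w)) =ᶠ[nhds x] fun _ => (0:ℝ) := by
            have hopen : IsOpen {s : ℝ | c + s * w < 0} :=
              isOpen_lt (continuous_const.add (continuous_id.mul continuous_const)) continuous_const
            filter_upwards [hopen.mem_nhds h] with s hs
            simp [max_eq_left (le_of_lt hs)]
          exact (hasDerivAt_const x (0:ℝ)).congr_of_eventuallyEq hev
        have : HasDerivWithinAt (fun s : ℝ => max 0 (c + s * w)) 0 (Set.Ioi x) x :=
          this.hasDerivWithinAt
        simpa [posSign, not_lt.2 (le_of_lt h)] using this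
      · have hbase : HasDerivWithinAt (fun _ : ℝ => (0:ℝ)) 0 (Set.Ioi x) x :=
          (hasDerivAt_const x (0:ℝ)).hasDerivWithinAt
        have : HasDerivWithinAt (fun s : ℝ => max 0 (c + s * w)) 0 (Set.Ioi x) x := by
          refine hbase.congr (fun y hy => ?_) (by simp [h])
          have : c + y * w < 0 := by
            have : y > x := hy
            nlinarith
          simp [max_eq_left (le_of_lt this)]
        simpa [posSign, h] using this
      · have : HasDerivAt (fun s : ℝ => max 0 (c + s * w)) w x := by
          have hev : (fun s : ℝ => max 0 (c + s * w)) =ᶠ[nhds x] fun s => c + s * w := by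
            have hopen : IsOpen {s : ℝ | 0 < c + s * w} :=
              isOpen_lt continuous_const (continuous_const.add (continuous_id.mul continuous_const))
            filter_upwards [hopen.mem_nhds h] with s hs
            simp [max_eq_right (le_of_lt hs)]
          have hb : HasDerivAt (fun s : ℝ => c + s * w) w x := by
            simpa using (hasDerivAt_id x).mul_const w |>.const_add c
          exact hb.congr_of_eventuallyEq hev
        simpa [posSign, h] using this.hasDerivWithinAt
  · subst hw; simp [posSign]
  · -- w > 0
    rw [← intervalIntegral.integral_mul_const]
    have hae : ∀ᵐ x : ℝ ∂MeasureTheory.volume, x ≠ (-c)/w := by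
      rw [MeasureTheory.ae_iff]
      simpa using Real.volume_singleton (x := (-c)/w)
    have hcongr : ∫ s in (0:ℝ)..1, posSign (c + s * w) * w
        = ∫ s in (0:ℝ)..1, (if 0 ≤ c + s * w then (1:ℝ) else 0) * w := by
      apply intervalIntegral.integral_congr_ae
      filter_upwards [hae] with x hx _
      have hne : c + x * w ≠ 0 := by
        intro h0
        apply hx
        field_simp
        linarith
      rcases lt_or_gt_of_ne hne with h | h
      · simp [posSign, not_lt.2 (le_of_lt h), not_le.2 h]
      · simp [posSign, h, le_of_lt h]
    rw [hcongr]
    have hmono : Monotone fun s : ℝ => (if 0 ≤ c + s * w then (1:ℝ) else 0) := by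
      intro x y hxy
      dsimp only
      split_ifs with h1 h2 h2 <;> norm_num
      exact h2 (by nlinarith)
    have := intervalIntegral.integral_eq_sub_of_hasDeriv_right_of_le (f := fun s => max 0 (c + s * w))
      (f' := fun s => (if 0 ≤ c + s * w then (1:ℝ) else 0) * w) (a := 0) (b := 1) (by norm_num) hcontF.continuousOn ?_
      (hmono.intervalIntegrable.mul_const w)
    · rw [this]; norm_num
    · intro x _
      rcases lt_trichotomy (c + x * w) 0 with h | h | h
      · have : HasDerivAt (fun s : ℝ => max 0 (c + s * w)) 0 x := by
          have hev : (fun s : ℝ => max 0 (c + s * w)) =ᶠ[nhds x] fun _ => (0:ℝ) := by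
            have hopen : IsOpen {s : ℝ | c + s * w < 0} :=
              isOpen_lt (continuous_const.add (continuous_id.mul continuous_const)) continuous_const
            filter_upwards [hopen.mem_nhds h] with s hs
            simp [max_eq_left (le_of_lt hs)]
          exact (hasDerivAt_const x (0:ℝ)).congr_of_eventuallyEq hev
        simpa [not_le.2 h] using this.hasDerivWithinAt
      · have hb : HasDerivWithinAt (fun s : ℝ => c + s * w) w (Set.Ioi x) x := by
          simpa using ((hasDerivAt_id x).mul_const w |>.const_add c).hasDerivWithinAt
        have : HasDerivWithinAt (fun s : ℝ => max 0 (c + s * w)) w (Set.Ioi x) x := by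
          refine hb.congr (fun y hy => ?_) (by simp [h])
          have : 0 < c + y * w := by
            have : y > x := hy
            nlinarith
          simp [max_eq_right (le_of_lt this)]
        simpa [h.ge] using this
      · have : HasDerivAt (fun s : ℝ => max 0 (c + s * w)) w x := by
          have hev : (fun s : ℝ => max 0 (c + s * w)) =ᶠ[nhds x] fun s => c + s * w := by
            have hopen : IsOpen {s : ℝ | 0 < c + s * w} :=
              isOpen_lt continuous_const (continuous_const.add (continuous_id.mul continuous_const))
            filter_upwards [hopen.mem_nhds h] with s hs
            simp [max_eq_right (le_of_lt hs)]
          have hb : HasDerivAt (fun s : ℝ => c + s * w) w x := by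
            simpa using (hasDerivAt_id x).mul_const w |>.const_add c
          exact hb.congr_of_eventuallyEq hev
        simpa [le_of_lt h] using this.hasDerivWithinAt

lemma sq_max_deriv (ξ : ℝ) : HasDerivAt (fun x : ℝ => max 0 x ^ 2) (2 * max 0 ξ) ξ := by
  rcases lt_trichotomy ξ 0 with h | h | h
  · have hev : (fun x : ℝ => max 0 x ^ 2) =ᶠ[nhds ξ] fun _ => (0:ℝ) := by
      filter_upwards [isOpen_Iio.mem_nhds h] with x hx
      simp [max_eq_left (le_of_lt (Set.mem_Iio.mp hx))]
    have := (hasDerivAt_const ξ (0:ℝ)).congr_of_eventuallyEq hev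
    simpa [max_eq_left (le_of_lt h)] using this
  · subst h
    rw [hasDerivAt_iff_isLittleO_nhds_zero]
    have hO : (fun h : ℝ => max 0 h ^ 2) =O[nhds (0:ℝ)] fun h => h * h := by
      apply Asymptotics.isBigO_of_le
      intro x
      simp only [Real.norm_eq_abs]
      rw [abs_of_nonneg (by positivity : (0:ℝ) ≤ max 0 x ^ 2)]
      have h2 : max 0 x ^ 2 ≤ x * x := by
        rcases le_or_gt x 0 with hx | hx
        · rw [max_eq_left hx]; nlinarith
        · rw [max_eq_right hx.le]; nlinarith
      exact h2.trans (le_abs_self _)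
    have ho : (fun h : ℝ => h * h) =o[nhds (0:ℝ)] fun h : ℝ => h := by
      have h1 : (fun h : ℝ => h) =o[nhds (0:ℝ)] fun _ => (1:ℝ) :=
        (Asymptotics.isLittleO_one_iff ℝ).2 Filter.tendsto_id
      simpa using h1.mul_isBigO (Asymptotics.isBigO_refl (fun h : ℝ => h) (nhds 0))
    have := hO.trans_isLittleO ho
    simp only [zero_add, smul_eq_mul]
    simpa using this
  · have hev : (fun x : ℝ => max 0 x ^ 2) =ᶠ[nhds ξ] fun x => x ^ 2 := by
      filter_upwards [isOpen_Ioi.mem_nhds h] with x hx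
      simp [max_eq_right (le_of_lt (Set.mem_Ioi.mp hx))]
    have hb : HasDerivAt (fun x : ℝ => x ^ 2) (2 * ξ) ξ := by
      simpa using hasDerivAt_pow 2 ξ
    have := hb.congr_of_eventuallyEq hev
    simpa [max_eq_right (le_of_lt h)] using this

lemma keyD (u v : ℝ) : ∫ t in (0:ℝ)..1, max 0 (u + t * v) * v
    = (1/2) * (max 0 (u + v) ^ 2) - (1/2) * (max 0 u ^ 2) := by
  have hd : ∀ t : ℝ, HasDerivAt (fun t : ℝ => (1/2) * max 0 (u + t * v) ^ 2) (max 0 (u + t * v) * v) t := by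
    intro t
    have h1 : HasDerivAt (fun t : ℝ => u + t * v) v t := by
      simpa using (hasDerivAt_id t).mul_const v |>.const_add u
    have h2 := (sq_max_deriv (u + t * v)).comp t h1
    have h3 := h2.const_mul (1/2 : ℝ)
    exact h3.congr_deriv (by ring)
  have hcont : Continuous fun t : ℝ => max 0 (u + t * v) * v :=
    (continuous_const.max (continuous_const.add (continuous_id.mul continuous_const))).mul continuous_const
  have := intervalIntegral.integral_eq_sub_of_hasDerivAt (f := fun t : ℝ => (1/2) * max 0 (u + t * v) ^ 2)
    (f' := fun t => max 0 (u + t * v) * v) (a := 0) (b := 1)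
    (fun x _ => hd x) (hcont.intervalIntegrable 0 1)
  rw [this]; norm_num

lemma keyC (u v : ℝ) :
    (∫ t in (0:ℝ)..1, (∫ s in (0:ℝ)..1, posSign (u + s * t * v)) * (2 * t)) * v ^ 2
      = max 0 (u + v) ^ 2 - max 0 u ^ 2 - 2 * (v * max 0 u) := by
  rw [← intervalIntegral.integral_mul_const]
  have hpt : ∀ t : ℝ, (∫ s in (0:ℝ)..1, posSign (u + s * t * v)) * (2 * t) * v ^ 2
      = 2 * (max 0 (u + t * v) * v) - 2 * (max 0 u * v) := by
    intro t
    have hb := keyB u (t * v)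
    have harg : ∀ s : ℝ, u + s * t * v = u + s * (t * v) := by intro s; ring
    simp_rw [harg]
    linear_combination (2*v) * hb
  rw [intervalIntegral.integral_congr (fun t _ => hpt t)]
  have hcont : Continuous fun t : ℝ => 2 * (max 0 (u + t * v) * v) :=
    continuous_const.mul ((continuous_const.max (continuous_const.add (continuous_id.mul continuous_const))).mul continuous_const)
  rw [intervalIntegral.integral_sub (hcont.intervalIntegrable 0 1) (intervalIntegrable_const)]
  rw [intervalIntegral.integral_const_mul, keyD]
  simp
  ring

end AuxTaylor

/-- Lemma 3: Taylor identity for `φ(p) = ½‖(x̂ + Aᵀp)₊‖² − bᵀp` with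
remainder `½ qᵀ A Diag(d) Aᵀ q`. -/
theorem taylor_identity_phi {m n : ℕ} (A : Matrix (Fin m) (Fin n) ℝ)
    (b : Fin m → ℝ) (xhat : Fin n → ℝ)
    (φ : (Fin m → ℝ) → ℝ)
    (hφ : ∀ p, φ p = (1/2) * ∑ j, (max 0 ((xhat + Aᵀ *ᵥ p) j))^2 - b ⬝ᵥ p)
    (g : (Fin m → ℝ) → (Fin m → ℝ))
    (hg : ∀ p, g p = A *ᵥ (fun j => max 0 ((xhat + Aᵀ *ᵥ p) j)) - b)
    (p q : Fin m → ℝ) (d : Fin n → ℝ)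
    (hd : ∀ j, d j = ∫ t in (0:ℝ)..1,
        (∫ s in (0:ℝ)..1, posSign ((xhat + Aᵀ *ᵥ p + (s * t) • (Aᵀ *ᵥ q)) j)) * (2 * t)) :
    φ (p + q) - φ p - q ⬝ᵥ g p
      = (1/2) * (q ⬝ᵥ (A * Matrix.diagonal d * Aᵀ) *ᵥ q) := by
  set u : Fin n → ℝ := xhat + Aᵀ *ᵥ p with hu
  set v : Fin n → ℝ := Aᵀ *ᵥ q with hv
  have hdj : ∀ j, d j * (v j * v j)
      = max 0 (u j + v j) ^ 2 - max 0 (u j) ^ 2 - 2 * (v j * max 0 (u j)) := by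
    intro j
    have harg : ∀ s t : ℝ, (xhat + Aᵀ *ᵥ p + (s * t) • (Aᵀ *ᵥ q)) j = u j + s * t * v j := by
      intro s t; simp [hu, hv, smul_eq_mul]
    have hkc := keyC (u j) (v j)
    rw [hd j]
    simp only [Pi.add_apply, Pi.smul_apply, smul_eq_mul]
    rw [show v j * v j = v j ^ 2 by ring]
    rw [← hkc]
  -- expand φ and g
  rw [hφ, hφ, hg]
  have hq : xhat + Aᵀ *ᵥ (p + q) = fun j => u j + v j := by
    funext j; simp [hu, hv, Matrix.mulVec_add]; ring
  rw [hq]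
  -- dot products
  rw [dotProduct_sub, Matrix.dotProduct_mulVec, ← Matrix.mulVec_transpose]
  rw [← Matrix.mulVec_mulVec, ← Matrix.mulVec_mulVec, Matrix.dotProduct_mulVec,
    ← Matrix.mulVec_transpose]
  rw [dotProduct_add, dotProduct_comm q b]
  simp only [dotProduct, Matrix.mulVec_diagonal, ← hv]
  have hfin : ∑ j, ((1/2) * max 0 (u j + v j) ^ 2 - (1/2) * max 0 (u j) ^ 2 - v j * max 0 (u j))
      = ∑ j, (1/2) * (v j * (d j * v j)) :=
    Finset.sum_congr rfl fun j _ => by linear_combination (-1/2) * hdj j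
  rw [Finset.sum_sub_distrib, Finset.sum_sub_distrib, ← Finset.mul_sum, ← Finset.mul_sum,
    ← Finset.mul_sum] at hfin
  ring_nf
  ring_nf at hfin
  linarith [hfin]
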